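/- Let V be a 4-dimensional real inner product space, let 𝒯 : V × V × V → ℝ be an alternating trilinear form, and let J : V → V be a linear isometry with J ∘ J = −id_V. Then for all X, Y, Z ∈ V one has 𝒯(X,Y,Z) − 𝒯(JX,JY,Z) − 𝒯(JX,Y,JZ) − 𝒯(X,JY,JZ) = 0. -/

import Mathlib

open scoped RealInnerProductSpace

section SkewTorsionAux

variable {V : Type*} [NormedAddCommGroup V] [InnerProductSpace ℝ V]

private lemma stk_upd0 {α : Type*} (a b c a' : α) :
    Function.update ![a, b, c] (0 : Fin 3) a' = ![a', b, c] := by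
  ext i; fin_cases i <;> simp

private lemma stk_upd1 {α : Type*} (a b c a' : α) :
    Function.update ![a, b, c] (1 : Fin 3) a' = ![a, a', c] := by
  ext i; fin_cases i <;> simp [Function.update]

private lemma stk_upd2 {α : Type*} (a b c a' : α) :
    Function.update ![a, b, c] (2 : Fin 3) a' = ![a, b, a'] := by
  ext i; fin_cases i <;> simp [Function.update]

private lemma stk_neg0 (f : MultilinearMap ℝ (fun _ : Fin 3 => V) ℝ) (a b c : V) :
    f ![-a, b, c] = -f ![a, b, c] := by
  have h := f.map_update_neg ![a, b, c] 0 a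
  rwa [stk_upd0, stk_upd0] at h

private lemma stk_neg1 (f : MultilinearMap ℝ (fun _ : Fin 3 => V) ℝ) (a b c : V) :
    f ![a, -b, c] = -f ![a, b, c] := by
  have h := f.map_update_neg ![a, b, c] 1 b
  rwa [stk_upd1, stk_upd1] at h

private lemma stk_neg2 (f : MultilinearMap ℝ (fun _ : Fin 3 => V) ℝ) (a b c : V) :
    f ![a, b, -c] = -f ![a, b, c] := by
  have h := f.map_update_neg ![a, b, c] 2 c
  rwa [stk_upd2, stk_upd2] at h

private lemma stk_swap12 (T : V [⋀^Fin 3]→ₗ[ℝ] ℝ) (a b c : V) :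
    T ![b, a, c] = -T ![a, b, c] := by
  have h := T.map_swap (v := ![a, b, c]) (i := (0 : Fin 3)) (j := 1) (by decide)
  rw [show (![a, b, c] ∘ Equiv.swap (0 : Fin 3) 1) = ![b, a, c] by
    ext i; fin_cases i <;> simp [Equiv.swap_apply_def]] at h
  exact h

private lemma stk_swap13 (T : V [⋀^Fin 3]→ₗ[ℝ] ℝ) (a b c : V) :
    T ![c, b, a] = -T ![a, b, c] := by
  have h := T.map_swap (v := ![a, b, c]) (i := (0 : Fin 3)) (j := 2) (by decide)
  rw [show (![a, b, c] ∘ Equiv.swap (0 : Fin 3) 2) = ![c, b, a] by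
    ext i; fin_cases i <;> simp [Equiv.swap_apply_def]] at h
  exact h

private lemma stk_swap23 (T : V [⋀^Fin 3]→ₗ[ℝ] ℝ) (a b c : V) :
    T ![a, c, b] = -T ![a, b, c] := by
  have h := T.map_swap (v := ![a, b, c]) (i := (1 : Fin 3)) (j := 2) (by decide)
  rw [show (![a, b, c] ∘ Equiv.swap (1 : Fin 3) 2) = ![a, c, b] by
    ext i; fin_cases i <;> simp [Equiv.swap_apply_def]] at h
  exact h

private lemma stk_neg0' (T : V [⋀^Fin 3]→ₗ[ℝ] ℝ) (a b c : V) :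
    T ![-a, b, c] = -T ![a, b, c] := by
  simpa using stk_neg0 T.toMultilinearMap a b c

private lemma stk_neg1' (T : V [⋀^Fin 3]→ₗ[ℝ] ℝ) (a b c : V) :
    T ![a, -b, c] = -T ![a, b, c] := by
  simpa using stk_neg1 T.toMultilinearMap a b c

end SkewTorsionAux

/-- Let `V` be a 4-dimensional real inner product space, `𝒯` an
alternating trilinear form on `V`, and `J : V → V` a linear isometry with `J ∘ J = -id`.
Then `𝒯(X,Y,Z) − 𝒯(JX,JY,Z) − 𝒯(JX,Y,JZ) − 𝒯(X,JY,JZ) = 0`. -/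
theorem skew_torsion_identity
    (V : Type*) [NormedAddCommGroup V] [InnerProductSpace ℝ V]
    (hdim : Module.finrank ℝ V = 4)
    (𝒯 : V [⋀^Fin 3]→ₗ[ℝ] ℝ)
    (J : V →ₗᵢ[ℝ] V) (hJ : ∀ x : V, J (J x) = -x)
    (X Y Z : V) :
    𝒯 ![X, Y, Z] - 𝒯 ![J X, J Y, Z] - 𝒯 ![J X, Y, J Z] - 𝒯 ![X, J Y, J Z] = 0 := by
  classical
  haveI : FiniteDimensional ℝ V := FiniteDimensional.of_finrank_eq_succ hdim
  -- basic orthogonality facts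
  have horth : ∀ x : V, ⟪x, J x⟫ = 0 := by
    intro x
    have h1 : ⟪J x, J (J x)⟫ = ⟪x, J x⟫ := J.inner_map_map x (J x)
    rw [hJ, inner_neg_right] at h1
    have h2 : ⟪J x, x⟫ = ⟪x, J x⟫ := real_inner_comm _ _
    linarith
  -- find a unit vector u
  haveI : Nontrivial V := by
    apply Module.nontrivial_of_finrank_pos (R := ℝ); omega
  obtain ⟨u0, hu0⟩ := exists_ne (0 : V)
  set u : V := ‖u0‖⁻¹ • u0 with hu_def
  have hu1 : ‖u‖ = 1 := norm_smul_inv_norm hu0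
  -- find a unit vector w orthogonal to u and J u
  set K : Submodule ℝ V := Submodule.span ℝ ({u, J u} : Set V) with hK_def
  have hKle : Module.finrank ℝ K ≤ 2 := by
    refine le_trans (finrank_span_le_card _) ?_
    simp only [Set.toFinset_insert, Set.toFinset_singleton]
    exact le_trans (Finset.card_insert_le _ _) (by simp)
  have hKorth : Kᗮ ≠ ⊥ := by
    intro h
    have h4 := Submodule.finrank_add_finrank_orthogonal (K := K)
    rw [h, hdim] at h4
    simp [finrank_bot] at h4
    omega
  obtain ⟨w0, hw0K, hw0⟩ := Submodule.exists_mem_ne_zero_of_ne_bot hKorth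
  set w : V := ‖w0‖⁻¹ • w0 with hw_def
  have hw1 : ‖w‖ = 1 := norm_smul_inv_norm hw0
  have hwK : w ∈ Kᗮ := Submodule.smul_mem _ _ hw0K
  have huK : u ∈ K := Submodule.subset_span (by simp)
  have hJuK : J u ∈ K := Submodule.subset_span (by simp)
  have huw : ⟪u, w⟫ = 0 := Submodule.inner_right_of_mem_orthogonal huK hwK
  have hJuw : ⟪J u, w⟫ = 0 := Submodule.inner_right_of_mem_orthogonal hJuK hwK
  have huJw : ⟪u, J w⟫ = 0 := by
    have h1 : ⟪J u, J (J w)⟫ = ⟪u, J w⟫ := J.inner_map_map u (J w)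
    rw [hJ, inner_neg_right] at h1
    rw [← h1, hJuw, neg_zero]
  have hJuJw : ⟪J u, J w⟫ = ⟪u, w⟫ := J.inner_map_map u w
  -- the adapted orthonormal basis
  set e : Fin 4 → V := ![u, J u, w, J w] with he_def
  have hon : Orthonormal ℝ e := by
    rw [orthonormal_iff_ite]
    have hnu : ⟪u, u⟫ = 1 := by
      rw [real_inner_self_eq_norm_sq, hu1]; norm_num
    have hnw : ⟪w, w⟫ = 1 := by
      rw [real_inner_self_eq_norm_sq, hw1]; norm_num
    have hnJu : ⟪J u, J u⟫ = 1 := by rw [J.inner_map_map]; exact hnu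
    have hnJw : ⟪J w, J w⟫ = 1 := by rw [J.inner_map_map]; exact hnw
    have h12 : ⟪u, J u⟫ = 0 := horth u
    have h34 : ⟪w, J w⟫ = 0 := horth w
    have h23 : ⟪J u, w⟫ = 0 := hJuw
    have h24 : ⟪J u, J w⟫ = 0 := by rw [hJuJw]; exact huw
    intro i j
    fin_cases i <;> fin_cases j <;>
      simp [e, hu1, hw1, hnu, hnw, hnJu, hnJw, h12, h34, h23, h24, huw, huJw,
        real_inner_comm u (J u), real_inner_comm w (J w), real_inner_comm (J u) w,
        real_inner_comm (J u) (J w), real_inner_comm u w, real_inner_comm u (J w)]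
  have hcard : Fintype.card (Fin 4) = Module.finrank ℝ V := by simp [hdim]
  set b : Module.Basis (Fin 4) ℝ V :=
    basisOfLinearIndependentOfCardEqFinrank hon.linearIndependent hcard with hb_def
  have hb : ⇑b = e := coe_basisOfLinearIndependentOfCardEqFinrank _ _
  -- the defect multilinear map
  set Jl : V →ₗ[ℝ] V := J.toLinearMap with hJl_def
  set D : MultilinearMap ℝ (fun _ : Fin 3 => V) ℝ :=
    𝒯.toMultilinearMap
      - 𝒯.toMultilinearMap.compLinearMap ![Jl, Jl, LinearMap.id]
      - 𝒯.toMultilinearMap.compLinearMap ![Jl, LinearMap.id, Jl]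
      - 𝒯.toMultilinearMap.compLinearMap ![LinearMap.id, Jl, Jl] with hD_def
  have hD : ∀ a c d : V,
      D ![a, c, d] = 𝒯 ![a, c, d] - 𝒯 ![J a, J c, d] - 𝒯 ![J a, c, J d]
        - 𝒯 ![a, J c, J d] := by
    intro a c d
    have e1 : (fun i => (![Jl, Jl, LinearMap.id] i) (![a, c, d] i)) = ![J a, J c, d] := by
      ext i; fin_cases i <;> simp [Jl]
    have e2 : (fun i => (![Jl, LinearMap.id, Jl] i) (![a, c, d] i)) = ![J a, c, J d] := by
      ext i; fin_cases i <;> simp [Jl]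
    have e3 : (fun i => (![LinearMap.id, Jl, Jl] i) (![a, c, d] i)) = ![a, J c, J d] := by
      ext i; fin_cases i <;> simp [Jl]
    simp only [hD_def, MultilinearMap.sub_apply, MultilinearMap.compLinearMap_apply,
      e1, e2, e3, AlternatingMap.coe_multilinearMap]
  -- D is alternating
  have hDs12 : ∀ a c d : V, D ![c, a, d] = -D ![a, c, d] := by
    intro a c d
    rw [hD, hD, stk_swap12 𝒯 a c d, stk_swap12 𝒯 (J a) (J c) d,
      stk_swap12 𝒯 (J a) c (J d), stk_swap12 𝒯 a (J c) (J d)]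
    ring
  have hDs13 : ∀ a c d : V, D ![d, c, a] = -D ![a, c, d] := by
    intro a c d
    rw [hD, hD, stk_swap13 𝒯 a c d, stk_swap13 𝒯 (J a) (J c) d,
      stk_swap13 𝒯 (J a) c (J d), stk_swap13 𝒯 a (J c) (J d)]
    ring
  have hDs23 : ∀ a c d : V, D ![a, d, c] = -D ![a, c, d] := by
    intro a c d
    rw [hD, hD, stk_swap23 𝒯 a c d, stk_swap23 𝒯 (J a) (J c) d,
      stk_swap23 𝒯 (J a) c (J d), stk_swap23 𝒯 a (J c) (J d)]
    ring
  -- D (JX, JY, Z) = -D (X, Y, Z)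
  have hDJJ : ∀ a c d : V, D ![J a, J c, d] = -D ![a, c, d] := by
    intro a c d
    rw [hD, hD, hJ a, hJ c]
    rw [show 𝒯 ![-a, -c, d] = 𝒯 ![a, c, d] by
        rw [stk_neg0' 𝒯, stk_neg1' 𝒯]; ring,
      stk_neg0' 𝒯 a (J c) (J d), stk_neg1' 𝒯 (J a) c (J d)]
    ring
  -- key vanishing lemmas
  have hP12 : ∀ x y : V, D ![x, J x, y] = 0 := by
    intro x y
    have h1 := hDJJ x (J x) y
    rw [hJ x] at h1
    have h2 : D ![J x, -x, y] = -D ![J x, x, y] := stk_neg1 D _ _ _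
    have h3 : D ![J x, x, y] = -D ![x, J x, y] := hDs12 x (J x) y
    -- h1 : D ![J x, -x, y] = -D ![x, J x, y]  (note first two args of hDJJ at (x,x))
    -- combine
    rw [h2, h3] at h1
    -- h1 : -(-(D ![x, J x, y])) = -D ![x, J x, y]
    have h4 := hDs12 x x y
    linarith [h1, h4]
  have hP21 : ∀ x y : V, D ![J x, x, y] = 0 := by
    intro x y; rw [hDs12 x (J x) y, hP12]; ring
  have hP13 : ∀ x y : V, D ![x, y, J x] = 0 := by
    intro x y; rw [hDs23 x (J x) y, hP12]; ring
  have hP31 : ∀ x y : V, D ![J x, y, x] = 0 := by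
    intro x y; rw [hDs13 x y (J x), hP13]; ring
  have hP23 : ∀ x y : V, D ![y, x, J x] = 0 := by
    intro x y; rw [hDs12 x y (J x), hP13]; ring
  have hP32 : ∀ x y : V, D ![y, J x, x] = 0 := by
    intro x y; rw [hDs23 y x (J x), hP23]; ring
  have hE1 : ∀ x y : V, D ![x, x, y] = 0 := by
    intro x y; have := hDs12 x x y; linarith
  have hE2 : ∀ x y : V, D ![x, y, x] = 0 := by
    intro x y; have := hDs13 x y x; linarith
  have hE3 : ∀ x y : V, D ![y, x, x] = 0 := by
    intro x y; have := hDs23 y x x; linarith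
  -- conclude D = 0 using the basis
  have hD0 : D = 0 := by
    apply Module.Basis.ext_multilinear (fun _ => b)
    intro v
    have hv : (fun i => b (v i)) = ![e (v 0), e (v 1), e (v 2)] := by
      ext i; fin_cases i <;> simp [hb]
    rw [hv]
    show D ![e (v 0), e (v 1), e (v 2)] = (0 : MultilinearMap ℝ (fun _ : Fin 3 => V) ℝ)
      ![e (v 0), e (v 1), e (v 2)]
    rw [MultilinearMap.zero_apply]
    generalize v 0 = i
    generalize v 1 = j
    generalize v 2 = k
    fin_cases i <;> fin_cases j <;> fin_cases k <;>
      simp [e, hP12, hP21, hP13, hP31, hP23, hP32, hE1, hE2, hE3]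
  have := hD X Y Z
  rw [hD0] at this
  simp only [MultilinearMap.zero_apply] at this
  linarith
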